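/- arXiv:2410.02909 — 7 statements merged into one kernel-verified Lean document; each statement's English description precedes it below -/
import Mathlib

section
/- Let E, F, Z be normed spaces, U ⊆ E open, and f : U × Z → F a C¹ map such that f(y,·) is linear for each y ∈ U. Then the map f^∨ : U → L(Z,F), y ↦ f(y,·), is continuous with respect to the operator norm on L(Z,F). -/
open Set

/-- If `f : U × Z → F` is C¹ and `f(y,·)` is continuous linear for each `y ∈ U`,
then `f^∨ : U → L(Z,F)`, `y ↦ f(y,·)`, is continuous for the operator norm. -/
theorem continuousOn_of_contDiffOn_one
    {E F Z : Type*} [NormedAddCommGroup E] [NormedSpace ℝ E]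
    [NormedAddCommGroup F] [NormedSpace ℝ F]
    [NormedAddCommGroup Z] [NormedSpace ℝ Z]
    (U : Set E) (hU : IsOpen U) (f : E → Z → F)
    (hf : ContDiffOn ℝ 1 (fun p : E × Z => f p.1 p.2) (U ×ˢ (univ : Set Z)))
    (g : E → Z →L[ℝ] F) (hg : ∀ y ∈ U, ∀ z : Z, g y z = f y z) :
    ContinuousOn g U := by
  have hU' : IsOpen (U ×ˢ (univ : Set Z)) := hU.prod isOpen_univ
  set Fm : E × Z → F := fun p => f p.1 p.2 with hFm
  have hD : ContinuousOn (fun p => fderiv ℝ Fm p) (U ×ˢ (univ : Set Z)) :=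
    hf.continuousOn_fderiv_of_isOpen hU' le_rfl
  -- key identity : for y ∈ U, g y = (fderiv ℝ Fm (y,0)).comp inr
  have key : ∀ y ∈ U, g y = (fderiv ℝ Fm (y, 0)).comp (ContinuousLinearMap.inr ℝ E Z) := by
    intro y hy
    have hmem : (y, (0 : Z)) ∈ U ×ˢ (univ : Set Z) := ⟨hy, mem_univ _⟩
    have hdiff : DifferentiableAt ℝ Fm (y, 0) :=
      (hf.differentiableOn one_ne_zero).differentiableAt (hU'.mem_nhds hmem)
    have h1 : HasFDerivAt (fun z : Z => Fm (y, z))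
        ((fderiv ℝ Fm (y, 0)).comp (ContinuousLinearMap.inr ℝ E Z)) 0 := by
      have hin : HasFDerivAt (fun z : Z => ((y, z) : E × Z))
          (ContinuousLinearMap.inr ℝ E Z) 0 :=
        HasFDerivAt.prodMk (hasFDerivAt_const y (0 : Z)) (hasFDerivAt_id (0 : Z))
      exact hdiff.hasFDerivAt.comp 0 hin
    have h2 : HasFDerivAt (fun z : Z => Fm (y, z)) (g y) 0 := by
      have : (fun z : Z => Fm (y, z)) = fun z => g y z := by
        funext z; exact (hg y hy z).symm
      rw [this]
      exact (g y).hasFDerivAt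
    exact h2.unique h1
  have hcont : ContinuousOn
      (fun y => (fderiv ℝ Fm (y, 0)).comp (ContinuousLinearMap.inr ℝ E Z)) U := by
    have h0 : ContinuousOn (fun y : E => fderiv ℝ Fm (y, 0)) U := by
      apply hD.comp (Continuous.continuousOn (by continuity))
      intro y hy; exact ⟨hy, mem_univ _⟩
    exact h0.clm_comp continuousOn_const
  exact hcont.congr key
end

section
/- Let E, Z be Banach spaces, y₀ ∈ E, R > 0, and f : B̄_R(y₀) × Z → E a continuous map such that f(y,·) is linear for each y and ‖f(y₂,z) − f(y₁,z)‖ ≤ L‖y₂ − y₁‖‖z‖ for all y₁, y₂ ∈ B̄_R(y₀), z ∈ Z. Let a < b and γ : [a,b] → Z be integrable. Then the ODE y'(t) = f(y(t), γ(t)) has local uniqueness of Carathéodory solutions: any two absolutely continuous solutions with the same value at a point t₀ agree on a neighbourhood of t₀. -/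
open Set MeasureTheory

/-- A Carathéodory solution of `y'(t) = f(y(t), γ(t))` on `[a,b]`, anchored at `t₀`:
a continuous curve which is the indefinite integral of the (integrable) right-hand side,
i.e. an absolutely continuous curve solving the ODE almost everywhere. -/
def IsCaraSol {X Z : Type*} [NormedAddCommGroup X] [NormedSpace ℝ X]
    (f : X → Z → X) (γ : ℝ → Z) (a b t₀ : ℝ) (η : ℝ → X) : Prop :=
  ContinuousOn η (Icc a b) ∧
  IntegrableOn (fun s => f (η s) (γ s)) (Icc a b) ∧
  ∀ t ∈ Icc a b, η t = η t₀ + ∫ s in t₀..t, f (η s) (γ s)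

/-- Local uniqueness of Carathéodory solutions of `y' = f(y, γ(t))` for a right-hand side
which is linear in the second variable and Lipschitz in the first on a closed ball. -/
theorem local_uniqueness_caratheodory
    {E Z : Type*} [NormedAddCommGroup E] [NormedSpace ℝ E] [CompleteSpace E]
    [NormedAddCommGroup Z] [NormedSpace ℝ Z] [CompleteSpace Z]
    (y₀ : E) (R : ℝ) (hR : 0 < R) (f : E → Z → E)
    (hf : ContinuousOn (fun p : E × Z => f p.1 p.2) (Metric.closedBall y₀ R ×ˢ (univ : Set Z)))
    (hlin : ∀ y ∈ Metric.closedBall y₀ R, IsLinearMap ℝ (f y))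
    (L : ℝ) (hL : 0 ≤ L)
    (hLip : ∀ y₁ ∈ Metric.closedBall y₀ R, ∀ y₂ ∈ Metric.closedBall y₀ R, ∀ z : Z,
      ‖f y₂ z - f y₁ z‖ ≤ L * ‖y₂ - y₁‖ * ‖z‖)
    (a b : ℝ) (hab : a < b) (γ : ℝ → Z) (hγ : IntegrableOn γ (Icc a b))
    (t₀ : ℝ) (ht₀ : t₀ ∈ Icc a b) (η₁ η₂ : ℝ → E)
    (hη₁ball : ∀ t ∈ Icc a b, η₁ t ∈ Metric.closedBall y₀ R)
    (hη₂ball : ∀ t ∈ Icc a b, η₂ t ∈ Metric.closedBall y₀ R)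
    (hη₁ : IsCaraSol f γ a b t₀ η₁) (hη₂ : IsCaraSol f γ a b t₀ η₂)
    (heq : η₁ t₀ = η₂ t₀) :
    ∃ ε > 0, ∀ t ∈ Icc a b, |t - t₀| ≤ ε → η₁ t = η₂ t := by
  obtain ⟨hc₁, hi₁, he₁⟩ := hη₁
  obtain ⟨hc₂, hi₂, he₂⟩ := hη₂
  -- the integrable control function
  set g : ℝ → ℝ := (Icc a b).indicator (fun s => L * ‖γ s‖) with hgdef
  have hgint : Integrable g := by
    rw [integrable_indicator_iff measurableSet_Icc]
    exact hγ.norm.const_mul L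
  have hg0 : ∀ s, 0 ≤ g s := by
    intro s
    by_cases h : s ∈ Icc a b
    · simp only [hgdef, indicator_of_mem h]; positivity
    · simp [hgdef, indicator_of_notMem h]
  set G : ℝ → ℝ := fun x => ∫ s in t₀..x, g s with hGdef
  have hGcont : Continuous G := hgint.continuous_primitive t₀
  have hG0 : G t₀ = 0 := intervalIntegral.integral_same
  -- choose ε so that the integral of g over the ε-neighbourhood is at most 1/2
  obtain ⟨δ, hδ, hGδ⟩ := Metric.continuousAt_iff.1 hGcont.continuousAt (1/2) (by norm_num)
  set ε := δ / 2 with hεdef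
  have hε : 0 < ε := by positivity
  have hGsmall : ∀ x, |x - t₀| ≤ ε → |G x| ≤ 1 / 2 := by
    intro x hx
    have : dist x t₀ < δ := by
      rw [Real.dist_eq]; calc |x - t₀| ≤ ε := hx
        _ < δ := by rw [hεdef]; linarith
    have := le_of_lt (hGδ this)
    rwa [Real.dist_eq, hG0, sub_zero] at this
  refine ⟨ε, hε, ?_⟩
  -- the compact interval J around t₀
  set J : Set ℝ := Icc (max a (t₀ - ε)) (min b (t₀ + ε)) with hJdef
  have ht₀J : t₀ ∈ J := by
    constructor
    · exact max_le ht₀.1 (by linarith)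
    · exact le_min ht₀.2 (by linarith)
  have hJsub : J ⊆ Icc a b := Icc_subset_Icc (le_max_left _ _) (min_le_left _ _)
  have hφcont : ContinuousOn (fun t => ‖η₁ t - η₂ t‖) J :=
    ((hc₁.sub hc₂).mono hJsub).norm
  obtain ⟨tm, htmJ, htmmax⟩ :=
    isCompact_Icc.exists_isMaxOn ⟨t₀, ht₀J⟩ hφcont
  set M := ‖η₁ tm - η₂ tm‖ with hMdef
  have hM0 : 0 ≤ M := norm_nonneg _
  -- key estimate: for t ∈ J, ‖η₁ t - η₂ t‖ ≤ M * |G t|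
  have key : ∀ t ∈ J, ‖η₁ t - η₂ t‖ ≤ M * |G t| := by
    intro t htJ
    have htab : t ∈ Icc a b := hJsub htJ
    have huIcc : uIcc t₀ t ⊆ J := uIcc_subset_Icc ht₀J htJ
    have hF₁ : IntervalIntegrable (fun s => f (η₁ s) (γ s)) volume t₀ t :=
      (hi₁.mono_set (huIcc.trans hJsub)).intervalIntegrable
    have hF₂ : IntervalIntegrable (fun s => f (η₂ s) (γ s)) volume t₀ t :=
      (hi₂.mono_set (huIcc.trans hJsub)).intervalIntegrable
    have hdiff : η₁ t - η₂ t = ∫ s in t₀..t, (f (η₁ s) (γ s) - f (η₂ s) (γ s)) := by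
      rw [intervalIntegral.integral_sub hF₁ hF₂, he₁ t htab, he₂ t htab, heq]
      abel
    rw [hdiff]
    have hMg : IntervalIntegrable (fun s => M * g s) volume t₀ t :=
      (hgint.const_mul M).intervalIntegrable
    have hbound : ∀ᵐ s ∂(volume.restrict (Set.uIoc t₀ t)),
        ‖f (η₁ s) (γ s) - f (η₂ s) (γ s)‖ ≤ M * g s := by
      refine ae_restrict_of_forall_mem measurableSet_uIoc ?_
      intro s hs
      have hsJ : s ∈ J := huIcc (uIoc_subset_uIcc hs)
      have hsab : s ∈ Icc a b := hJsub hsJ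
      have h1 := hLip (η₂ s) (hη₂ball s hsab) (η₁ s) (hη₁ball s hsab) (γ s)
      have h2 : ‖η₁ s - η₂ s‖ ≤ M := htmmax hsJ
      have hgs : g s = L * ‖γ s‖ := indicator_of_mem hsab _
      calc ‖f (η₁ s) (γ s) - f (η₂ s) (γ s)‖ ≤ L * ‖η₁ s - η₂ s‖ * ‖γ s‖ := h1
        _ ≤ M * g s := by
            rw [hgs]
            have hγs : (0:ℝ) ≤ ‖γ s‖ := norm_nonneg _
            have := mul_le_mul_of_nonneg_right (mul_le_mul_of_nonneg_left h2 hL) hγs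
            nlinarith
    calc ‖∫ s in t₀..t, (f (η₁ s) (γ s) - f (η₂ s) (γ s))‖
        ≤ |∫ s in t₀..t, M * g s| :=
          intervalIntegral.norm_integral_le_abs_of_norm_le hbound hMg
      _ = M * |G t| := by
          rw [intervalIntegral.integral_const_mul, abs_mul, abs_of_nonneg hM0]
  -- conclude M = 0
  have hMsmall : M ≤ M * (1/2) := by
    have h1 := key tm htmJ
    have h2 : |tm - t₀| ≤ ε := by
      rw [abs_sub_le_iff]
      constructor
      · have := htmJ.2; have := min_le_right b (t₀ + ε); linarith [htmJ.2.trans (min_le_right b (t₀ + ε))]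
      · linarith [(le_max_right a (t₀ - ε)).trans htmJ.1]
    calc M ≤ M * |G tm| := h1
      _ ≤ M * (1/2) := by
          exact mul_le_mul_of_nonneg_left (hGsmall tm h2) hM0
  have hMzero : M = 0 := by linarith
  intro t htab htε
  have htJ : t ∈ J := by
    constructor
    · exact max_le htab.1 (by rw [abs_sub_le_iff] at htε; linarith [htε.2])
    · exact le_min htab.2 (by rw [abs_sub_le_iff] at htε; linarith [htε.1])
  have := key t htJ
  rw [hMzero, zero_mul] at this
  have : ‖η₁ t - η₂ t‖ = 0 := le_antisymm this (norm_nonneg _)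
  exact sub_eq_zero.1 (norm_eq_zero.1 this)
end

section
/- Let E, Z be Banach spaces, y₀ ∈ E, R > 0, and f : B̄_R(y₀) × Z → E continuous with f(y,·) linear for each y and satisfying the Lipschitz estimate ‖f(y₂,z) − f(y₁,z)‖ ≤ L‖y₂ − y₁‖‖z‖. Let a < b, t₀ ∈ [a,b], and γ ∈ L¹([a,b], Z) with L·‖γ‖_{L¹} < 1 and sup_{y ∈ B̄_R(y₀)} ‖f(y,·)‖_op · ‖γ‖_{L¹} ≤ R. Then the initial value problem y'(t) = f(y(t), γ(t)), y(t₀) = y₀ has a Carathéodory solution η : [a,b] → B̄_R(y₀) defined on all of [a,b]. -/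
open Set MeasureTheory TopologicalSpace

lemma contOn_comp_aesm {α β δ : Type*} [MeasurableSpace α] {μ : Measure α}
    [TopologicalSpace β] [PseudoMetrizableSpace β]
    [TopologicalSpace δ] [PseudoMetrizableSpace δ] [Nonempty δ]
    {g : β → δ} {s : Set β} {p : α → β} (hg : ContinuousOn g s) (hs : IsClosed s)
    (hp : AEStronglyMeasurable p μ) (hps : ∀ x, p x ∈ s) :
    AEStronglyMeasurable (fun x => g (p x)) μ := by
  classical
  letI := pseudoMetrizableSpacePseudoMetric β
  borelize β δ
  obtain ⟨hpm, t, ht, htp⟩ := aestronglyMeasurable_iff_aemeasurable_separable.1 hp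
  rw [aestronglyMeasurable_iff_aemeasurable_separable]
  refine ⟨?_, g '' (t ∩ s),
    (hg.mono inter_subset_right).isSeparable_image (ht.mono inter_subset_left), ?_⟩
  · have hgm : Measurable (s.piecewise g fun _ => Classical.arbitrary δ) := by
      apply measurable_of_isOpen
      intro v hv
      obtain ⟨u, u_open, hu⟩ : ∃ u, IsOpen u ∧ g ⁻¹' v ∩ s = u ∩ s :=
        continuousOn_iff'.1 hg v hv
      rw [Set.piecewise_preimage, Set.ite, hu]
      exact (u_open.measurableSet.inter hs.measurableSet).union
        (((measurable_const (a := Classical.arbitrary δ) (β := β)) hv.measurableSet).diff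
          hs.measurableSet)
    have : (fun x => g (p x)) = fun x => (s.piecewise g fun _ => Classical.arbitrary δ) (p x) := by
      funext x; rw [Set.piecewise_eq_of_mem _ _ _ (hps x)]
    rw [this]
    exact hgm.comp_aemeasurable hpm
  · filter_upwards [htp] with x hx
    exact mem_image_of_mem g ⟨hx, hps x⟩

/-- Quantitative Carathéodory existence: if `L‖γ‖_{L¹} < 1` and `S‖γ‖_{L¹} ≤ R`
(where `S` bounds the operator norms `‖f(y,·)‖`), then the initial value problem
`y' = f(y, γ(t))`, `y(t₀) = y₀` has a Carathéodory solution on all of `[a,b]`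
with values in the closed ball of radius `R` about `y₀`. -/
theorem global_existence_caratheodory
    {E Z : Type*} [NormedAddCommGroup E] [NormedSpace ℝ E] [CompleteSpace E]
    [NormedAddCommGroup Z] [NormedSpace ℝ Z] [CompleteSpace Z]
    (y₀ : E) (R : ℝ) (hR : 0 < R) (f : E → Z → E)
    (hf : ContinuousOn (fun p : E × Z => f p.1 p.2) (Metric.closedBall y₀ R ×ˢ (univ : Set Z)))
    (hlin : ∀ y ∈ Metric.closedBall y₀ R, IsLinearMap ℝ (f y))
    (L : ℝ) (hL : 0 ≤ L)
    (hLip : ∀ y₁ ∈ Metric.closedBall y₀ R, ∀ y₂ ∈ Metric.closedBall y₀ R, ∀ z : Z,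
      ‖f y₂ z - f y₁ z‖ ≤ L * ‖y₂ - y₁‖ * ‖z‖)
    (S : ℝ) (hS : ∀ y ∈ Metric.closedBall y₀ R, ∀ z : Z, ‖f y z‖ ≤ S * ‖z‖)
    (a b : ℝ) (hab : a < b) (γ : ℝ → Z) (hγ : IntegrableOn γ (Icc a b))
    (hsmall : L * ∫ s in Icc a b, ‖γ s‖ < 1)
    (hSR : S * ∫ s in Icc a b, ‖γ s‖ ≤ R)
    (t₀ : ℝ) (ht₀ : t₀ ∈ Icc a b) :
    ∃ η : ℝ → E, (∀ t ∈ Icc a b, η t ∈ Metric.closedBall y₀ R) ∧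
      IsCaraSol f γ a b t₀ η ∧ η t₀ = y₀ := by
  classical
  set D := Metric.closedBall y₀ R with hD
  set I := ∫ s in Icc a b, ‖γ s‖ with hIdef
  have hI0 : 0 ≤ I := integral_nonneg fun _ => norm_nonneg _
  have hγn : IntegrableOn (fun s => ‖γ s‖) (Icc a b) := hγ.norm
  set π : ℝ → Icc a b := projIcc a b hab.le with hπ
  have huIcc : uIcc a b = Icc a b := uIcc_of_le hab.le
  -- integrability of the integrand for any admissible curve
  have hmeas : ∀ u : C(Icc a b, E), (∀ t, u t ∈ D) →
      IntegrableOn (fun s => f (u (π s)) (γ s)) (Icc a b) := by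
    intro u hu
    have hpm : AEStronglyMeasurable (fun s : ℝ => (u (π s), γ s))
        (volume.restrict (Icc a b)) :=
      ((u.continuous.comp (continuous_projIcc)).aestronglyMeasurable).prodMk hγ.1
    have hcm : AEStronglyMeasurable (fun s => f (u (π s)) (γ s))
        (volume.restrict (Icc a b)) := by
      exact contOn_comp_aesm hf (Metric.isClosed_closedBall.prod isClosed_univ) hpm
        (fun s => ⟨hu _, mem_univ _⟩)
    exact Integrable.mono' (hγn.const_mul S) hcm
      (Filter.Eventually.of_forall fun s => hS _ (hu _) _)
  have hIcc_sub : ∀ {t₁ t₂ : ℝ}, t₁ ∈ Icc a b → t₂ ∈ Icc a b → uIcc t₁ t₂ ⊆ Icc a b :=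
    fun h1 h2 => uIcc_subset_Icc h1 h2
  have hii : ∀ u : C(Icc a b, E), (∀ t, u t ∈ D) → ∀ {t₁ t₂ : ℝ}, t₁ ∈ Icc a b → t₂ ∈ Icc a b →
      IntervalIntegrable (fun s => f (u (π s)) (γ s)) volume t₁ t₂ := by
    intro u hu t₁ t₂ h1 h2
    exact ((hmeas u hu).mono_set (hIcc_sub h1 h2)).intervalIntegrable
  -- norm bound of interval integrals over Icc a b
  have hnorm_le : ∀ (g : ℝ → E) (C : ℝ→ℝ), IntegrableOn g (Icc a b) → IntegrableOn C (Icc a b) →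
      (∀ s ∈ Icc a b, ‖g s‖ ≤ C s) → ∀ t ∈ Icc a b,
      ‖∫ s in t₀..t, g s‖ ≤ ∫ s in Icc a b, C s := by
    intro g C hg hC hgC t ht
    calc ‖∫ s in t₀..t, g s‖ ≤ ∫ s in Set.uIoc t₀ t, ‖g s‖ :=
          intervalIntegral.norm_integral_le_integral_norm_uIoc
      _ ≤ ∫ s in Icc a b, ‖g s‖ := by
          apply setIntegral_mono_set hg.norm
            (Filter.Eventually.of_forall fun s => norm_nonneg _)
          exact Filter.Eventually.of_forall
            (fun s hs => hIcc_sub ht₀ ht (uIoc_subset_uIcc hs))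
      _ ≤ ∫ s in Icc a b, C s :=
          setIntegral_mono_on hg.norm hC measurableSet_Icc hgC
  -- the admissible set
  set K : Set C(Icc a b, E) := {u | ∀ t, u t ∈ D} with hK
  have hKclosed : IsClosed K := by
    have : K = ⋂ t, (fun u : C(Icc a b, E) => u t) ⁻¹' D := by
      ext u; simp [hK, mem_iInter]
    rw [this]
    exact isClosed_iInter fun t =>
      Metric.isClosed_closedBall.preimage (continuous_eval_const t)
  haveI : CompleteSpace K := hKclosed.completeSpace_coe
  haveI : Nonempty K := ⟨⟨ContinuousMap.const _ y₀, fun t => Metric.mem_closedBall_self hR.le⟩⟩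
  -- the Picard map
  have hPcont : ∀ u : C(Icc a b, E), (∀ t, u t ∈ D) →
      Continuous ((Icc a b).restrict fun t : ℝ => y₀ + ∫ s in t₀..t, f (u (π s)) (γ s)) := by
    intro u hu
    apply ContinuousOn.restrict
    apply continuousOn_const.add
    have hci : IntervalIntegrable (fun s => f (u (π s)) (γ s)) volume a b :=
      hii u hu (left_mem_Icc.2 hab.le) (right_mem_Icc.2 hab.le)
    have hcOn := intervalIntegral.continuousOn_primitive_interval' hci
      (show t₀ ∈ Set.uIcc a b by rwa [huIcc])
    rw [huIcc] at hcOn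
    exact hcOn
  have hPmem : ∀ (u : C(Icc a b, E)), (∀ t, u t ∈ D) → ∀ t : Icc a b,
      y₀ + ∫ s in t₀..(t : ℝ), f (u (π s)) (γ s) ∈ D := by
    intro u hu t
    rw [hD, Metric.mem_closedBall]
    have hdist : dist (y₀ + ∫ s in t₀..(t : ℝ), f (u (π s)) (γ s)) y₀ =
        ‖∫ s in t₀..(t : ℝ), f (u (π s)) (γ s)‖ := by
      simp [dist_eq_norm]
    rw [hdist]
    calc ‖∫ s in t₀..(t : ℝ), f (u (π s)) (γ s)‖ ≤ ∫ s in Icc a b, S * ‖γ s‖ :=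
          hnorm_le _ _ (hmeas u hu) (hγn.const_mul S) (fun s _ => hS _ (hu _) _) t t.2
      _ = S * I := by rw [hIdef]; exact integral_const_mul S _
      _ ≤ R := hSR
  set Φ : K → K := fun u =>
    ⟨⟨(Icc a b).restrict fun t : ℝ => y₀ + ∫ s in t₀..t, f (u.1 (π s)) (γ s),
        hPcont u.1 u.2⟩, fun t => hPmem u.1 u.2 t⟩ with hΦdef
  have hΦval : ∀ (u : K) (t : Icc a b),
      (Φ u).1 t = y₀ + ∫ s in t₀..(t : ℝ), f (u.1 (π s)) (γ s) := fun u t => rfl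
  set k : NNReal := ⟨L * I, mul_nonneg hL hI0⟩ with hk
  have hΦlip : LipschitzWith k Φ := by
    apply LipschitzWith.of_dist_le_mul
    intro u v
    rw [Subtype.dist_eq]
    apply (ContinuousMap.dist_le (C := (k : ℝ) * dist u v) (mul_nonneg k.2 dist_nonneg)).2
    intro t
    have hsub : IntegrableOn
        (fun s => f (u.1 (π s)) (γ s) - f (v.1 (π s)) (γ s)) (Icc a b) :=
      (hmeas u.1 u.2).sub (hmeas v.1 v.2)
    have h1 : dist ((Φ u).1 t) ((Φ v).1 t) =
        ‖∫ s in t₀..(t : ℝ), (f (u.1 (π s)) (γ s) - f (v.1 (π s)) (γ s))‖ := by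
      rw [hΦval, hΦval, dist_add_left, dist_eq_norm,
        intervalIntegral.integral_sub (hii u.1 u.2 ht₀ t.2) (hii v.1 v.2 ht₀ t.2)]
    rw [h1]
    calc ‖∫ s in t₀..(t : ℝ), (f (u.1 (π s)) (γ s) - f (v.1 (π s)) (γ s))‖
        ≤ ∫ s in Icc a b, L * dist u.1 v.1 * ‖γ s‖ := by
          apply hnorm_le _ _ hsub ((hγn.const_mul _)) _ t t.2
          intro s _
          calc ‖f (u.1 (π s)) (γ s) - f (v.1 (π s)) (γ s)‖
              ≤ L * ‖u.1 (π s) - v.1 (π s)‖ * ‖γ s‖ := hLip _ (v.2 _) _ (u.2 _) _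
            _ ≤ L * dist u.1 v.1 * ‖γ s‖ := by
                have hd := ContinuousMap.dist_apply_le_dist (f := u.1) (g := v.1) (π s)
                rw [dist_eq_norm] at hd
                gcongr
      _ = (L * dist u.1 v.1) * I := by rw [hIdef]; exact integral_const_mul _ _
      _ = (k : ℝ) * dist u.1 v.1 := by show _ = (L * I) * dist u.1 v.1; ring
      _ = (k : ℝ) * dist u v := by rw [Subtype.dist_eq]
  have hΦ : ContractingWith k Φ := ⟨by rw [← NNReal.coe_lt_one, hk]; exact hsmall, hΦlip⟩
  set w : K := ContractingWith.fixedPoint Φ hΦ with hwdef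
  have hw : Φ w = w := hΦ.fixedPoint_isFixedPt
  have hval : ∀ t, t ∈ Icc a b → (w : C(Icc a b, E)) (π t) =
      y₀ + ∫ s in t₀..t, f ((w : C(Icc a b, E)) (π s)) (γ s) := by
    intro t ht
    conv_lhs => rw [← hw]
    rw [show π t = ⟨t, ht⟩ from projIcc_of_mem hab.le ht]
    exact hΦval w ⟨t, ht⟩
  have hη₀ : (w : C(Icc a b, E)) (π t₀) = y₀ := by
    rw [hval t₀ ht₀, intervalIntegral.integral_same, add_zero]
  refine ⟨fun t => (w : C(Icc a b, E)) (π t), fun t _ => w.2 (π t),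
    ⟨((map_continuous (w : C(Icc a b, E))).comp continuous_projIcc).continuousOn,
      hmeas (w : C(Icc a b, E)) w.2, ?_⟩, hη₀⟩
  intro t ht
  simpa [hη₀] using hval t ht
end

section
/- Let E, Z be Banach spaces, f : B̄_R(y₀) × Z → E continuous, linear in the second variable, and Lipschitz in the first variable in the sense ‖f(y₂,z)−f(y₁,z)‖ ≤ L‖y₂−y₁‖‖z‖, with L‖γ‖_{L¹} < 1 and S‖γ‖_{L¹} ≤ R where S = sup ‖f(y,·)‖_op. Then the Carathéodory solution of y' = f(y,γ(t)), y(t₀) = y₀ with values in B̄_R(y₀) is unique (it is the unique fixed point of the Picard operator on X). -/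
open Set MeasureTheory

/-- Under the smallness conditions `L‖γ‖_{L¹} < 1` and `S‖γ‖_{L¹} ≤ R`, the
Carathéodory solution of `y' = f(y,γ(t))`, `y(t₀) = y₀` with values in `B̄_R(y₀)` is
unique (it is the unique fixed point of the Picard operator on `X`). -/
theorem uniqueness_caratheodory_ball
    {E Z : Type*} [NormedAddCommGroup E] [NormedSpace ℝ E] [CompleteSpace E]
    [NormedAddCommGroup Z] [NormedSpace ℝ Z] [CompleteSpace Z]
    (y₀ : E) (R : ℝ) (hR : 0 < R) (f : E → Z → E)
    (hf : ContinuousOn (fun p : E × Z => f p.1 p.2) (Metric.closedBall y₀ R ×ˢ (univ : Set Z)))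
    (hlin : ∀ y ∈ Metric.closedBall y₀ R, IsLinearMap ℝ (f y))
    (L : ℝ) (hL : 0 ≤ L)
    (hLip : ∀ y₁ ∈ Metric.closedBall y₀ R, ∀ y₂ ∈ Metric.closedBall y₀ R, ∀ z : Z,
      ‖f y₂ z - f y₁ z‖ ≤ L * ‖y₂ - y₁‖ * ‖z‖)
    (S : ℝ) (hS : ∀ y ∈ Metric.closedBall y₀ R, ∀ z : Z, ‖f y z‖ ≤ S * ‖z‖)
    (a b : ℝ) (hab : a < b) (t₀ : ℝ) (ht₀ : t₀ ∈ Icc a b)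
    (γ : ℝ → Z) (hγ : IntegrableOn γ (Icc a b))
    (hsmall : L * ∫ s in Icc a b, ‖γ s‖ < 1)
    (hSR : S * ∫ s in Icc a b, ‖γ s‖ ≤ R)
    (η₁ η₂ : ℝ → E)
    (hη₁ball : ∀ t ∈ Icc a b, η₁ t ∈ Metric.closedBall y₀ R)
    (hη₂ball : ∀ t ∈ Icc a b, η₂ t ∈ Metric.closedBall y₀ R)
    (hη₁ : IsCaraSol f γ a b t₀ η₁) (hη₂ : IsCaraSol f γ a b t₀ η₂)
    (hη₁0 : η₁ t₀ = y₀) (hη₂0 : η₂ t₀ = y₀) :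
    EqOn η₁ η₂ (Icc a b) := by
  set I : ℝ := ∫ s in Icc a b, ‖γ s‖ with hI
  have hInn : 0 ≤ I := setIntegral_nonneg measurableSet_Icc (fun s _ => norm_nonneg _)
  set g : ℝ → E := fun s => f (η₁ s) (γ s) - f (η₂ s) (γ s) with hg
  have hgint : IntegrableOn g (Icc a b) := hη₁.2.1.sub hη₂.2.1
  have hcont : ContinuousOn (fun t => ‖η₁ t - η₂ t‖) (Icc a b) :=
    (hη₁.1.sub hη₂.1).norm
  obtain ⟨t₁, ht₁, hmax⟩ := isCompact_Icc.exists_isMaxOn (nonempty_Icc.mpr hab.le) hcont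
  set M : ℝ := ‖η₁ t₁ - η₂ t₁‖ with hM
  have hMnn : 0 ≤ M := norm_nonneg _
  have key : ∀ t ∈ Icc a b, ‖η₁ t - η₂ t‖ ≤ (L * I) * M := by
    intro t ht
    have hsub : Set.uIoc t₀ t ⊆ Icc a b :=
      (Ioc_subset_Icc_self).trans (uIcc_subset_Icc ht₀ ht)
    have hdiff : η₁ t - η₂ t = ∫ s in t₀..t, g s := by
      have h1 := hη₁.2.2 t ht
      have h2 := hη₂.2.2 t ht
      have hii₁ : IntervalIntegrable (fun s => f (η₁ s) (γ s)) volume t₀ t :=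
        intervalIntegrable_iff.mpr (hη₁.2.1.mono_set hsub)
      have hii₂ : IntervalIntegrable (fun s => f (η₂ s) (γ s)) volume t₀ t :=
        intervalIntegrable_iff.mpr (hη₂.2.1.mono_set hsub)
      rw [h1, h2, hη₁0, hη₂0, hg]
      rw [intervalIntegral.integral_sub hii₁ hii₂]
      abel
    rw [hdiff]
    calc ‖∫ s in t₀..t, g s‖ ≤ ∫ s in Set.uIoc t₀ t, ‖g s‖ :=
          intervalIntegral.norm_integral_le_integral_norm_uIoc
      _ ≤ ∫ s in Icc a b, ‖g s‖ := by
          apply setIntegral_mono_set hgint.norm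
          · exact Filter.Eventually.of_forall fun s => norm_nonneg _
          · exact HasSubset.Subset.eventuallyLE hsub
      _ ≤ ∫ s in Icc a b, L * M * ‖γ s‖ := by
          apply setIntegral_mono_on hgint.norm (hγ.norm.const_mul (L * M))
            measurableSet_Icc
          intro s hs
          have h := hLip (η₂ s) (hη₂ball s hs) (η₁ s) (hη₁ball s hs) (γ s)
          refine h.trans ?_
          have h2 : ‖η₁ s - η₂ s‖ ≤ M := hmax hs
          have := mul_le_mul_of_nonneg_right
            (mul_le_mul_of_nonneg_left h2 hL) (norm_nonneg (γ s))
          linarith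
      _ = (L * I) * M := by
          rw [integral_const_mul]; ring
  have hM0 : M = 0 := by
    by_contra h
    have hMpos : 0 < M := lt_of_le_of_ne hMnn (Ne.symm h)
    have := key t₁ ht₁
    nlinarith
  intro t ht
  have h1 := key t ht
  rw [hM0] at h1
  have h2 : ‖η₁ t - η₂ t‖ ≤ 0 := by linarith
  exact sub_eq_zero.mp (norm_le_zero_iff.mp h2)
end

section
/- Let E, F be Banach spaces, φ : U → V a C¹ diffeomorphism between open subsets U ⊆ E, V ⊆ F, Z a Banach space, and f : U × Z → E, g : V × Z → F maps with g(φ(x), z) = Dφ(x)(f(x,z)) for all x ∈ U, z ∈ Z. Let γ ∈ L¹([a,b],Z). Then η : [a,b] → U is a Carathéodory solution of η'(t) = f(η(t),γ(t)) if and only if φ ∘ η is a Carathéodory solution of x'(t) = g(x(t), γ(t)). -/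
open Set MeasureTheory Filter Topology
open scoped Interval

lemma isCaraSol_congr {X Z : Type*} [NormedAddCommGroup X] [NormedSpace ℝ X]
    {f : X → Z → X} {γ : ℝ → Z} {a b t₀ : ℝ} {η η' : ℝ → X}
    (ht₀ : t₀ ∈ Icc a b) (heq : EqOn η η' (Icc a b))
    (h : IsCaraSol f γ a b t₀ η) : IsCaraSol f γ a b t₀ η' := by
  obtain ⟨hc, hi, hs⟩ := h
  have huIcc : ∀ t ∈ Icc a b, uIcc t₀ t ⊆ Icc a b := by
    intro t ht
    have hIcc : Icc a b = uIcc a b := (uIcc_of_le (ht₀.1.trans ht₀.2)).symm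
    rw [hIcc] at ht₀ ht ⊢
    exact uIcc_subset_uIcc ht₀ ht
  refine ⟨hc.congr heq.symm, hi.congr_fun (fun s hs => by rw [← heq hs]) measurableSet_Icc, ?_⟩
  intro t ht
  rw [← heq ht, ← heq ht₀, hs t ht]
  congr 1
  exact intervalIntegral.integral_congr fun s hsm => by rw [heq (huIcc t ht hsm)]

lemma isCaraSol_comp
    {E F Z : Type*} [NormedAddCommGroup E] [NormedSpace ℝ E] [CompleteSpace E]
    [NormedAddCommGroup F] [NormedSpace ℝ F] [CompleteSpace F]
    (U : Set E) (hU : IsOpen U) (φ : E → F) (hφ : ContDiffOn ℝ 1 φ U)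
    (f : E → Z → E) (g : F → Z → F)
    (hrel : ∀ x ∈ U, ∀ z : Z, g (φ x) z = fderiv ℝ φ x (f x z))
    (a b : ℝ) (hab : a ≤ b) (γ : ℝ → Z) (η : ℝ → E)
    (hηU : ∀ t ∈ Icc a b, η t ∈ U)
    (h : IsCaraSol f γ a b a η) : IsCaraSol g γ a b a (φ ∘ η) := by
  haveI : SecondCountableTopologyEither ℝ (E →L[ℝ] F) := ⟨Or.inl inferInstance⟩
  obtain ⟨hηc, hFi, hsol⟩ := h
  set F₀ : ℝ → E := fun s => f (η s) (γ s) with hF₀def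
  set A : E → (E →L[ℝ] F) := fderiv ℝ φ with hAdef
  have hAc : ContinuousOn A U := hφ.continuousOn_fderiv_of_isOpen hU le_rfl
  have hder : ∀ x ∈ U, HasFDerivAt φ (A x) x := fun x hx =>
    ((hφ.differentiableOn one_ne_zero).differentiableAt (hU.mem_nhds hx)).hasFDerivAt
  have hφc : ContinuousOn φ U := hφ.continuousOn
  have huIcc : ∀ t ∈ Icc a b, uIcc a t ⊆ Icc a b := by
    intro t ht
    have hIcc : Icc a b = uIcc a b := (uIcc_of_le hab).symm
    rw [hIcc] at ht ⊢
    exact uIcc_subset_uIcc left_mem_uIcc ht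
  -- compact image and bounds
  have hK : IsCompact (η '' Icc a b) := isCompact_Icc.image_of_continuousOn hηc
  have hKU : η '' Icc a b ⊆ U := image_subset_iff.2 hηU
  obtain ⟨M₀, hM₀⟩ := hK.exists_bound_of_continuousOn (hAc.mono hKU)
  have hM₀0 : (0:ℝ) ≤ M₀ :=
    le_trans (norm_nonneg _) (hM₀ (η a) ⟨a, left_mem_Icc.2 hab, rfl⟩)
  set W : Set E := U ∩ A ⁻¹' {L | ‖L‖ < M₀ + 1} with hWdef
  have hW : IsOpen W :=
    hAc.isOpen_inter_preimage hU (isOpen_lt continuous_norm continuous_const)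
  have hKW : η '' Icc a b ⊆ W := fun y hy =>
    ⟨hKU hy, lt_of_le_of_lt (hM₀ y hy) (lt_add_one _)⟩
  obtain ⟨δ, hδ, hδW⟩ := hK.exists_thickening_subset_open hW hKW
  -- indicator version of the field
  set F₁ : ℝ → E := (Icc a b).indicator F₀ with hF₁def
  have hF₁ : Integrable F₁ := (integrable_indicator_iff measurableSet_Icc).2 hFi
  have hF₁eq : EqOn F₁ F₀ (Icc a b) := fun s hs => indicator_of_mem hs _
  -- approximating sequence
  have happ : ∀ n : ℕ, ∃ Gn : ℝ → E, HasCompactSupport Gn ∧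
      (∫ x, ‖F₁ x - Gn x‖) ≤ ((n:ℝ)+1)⁻¹ ∧ Continuous Gn ∧ Integrable Gn :=
    fun n => hF₁.exists_hasCompactSupport_integral_sub_le (by positivity)
  choose G hGs hGε hGc hGi using happ
  set e : ℕ → ℝ := fun n => ∫ x, ‖F₁ x - G n x‖ with hedef
  have he0 : ∀ n, 0 ≤ e n := fun n => integral_nonneg fun x => norm_nonneg _
  have heT : Tendsto e atTop (𝓝 0) := by
    refine squeeze_zero he0 hGε ?_
    simpa using tendsto_one_div_add_atTop_nhds_zero_nat (𝕜 := ℝ)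
  set ηa : ℕ → ℝ → E := fun n t => η a + ∫ s in a..t, G n s with hηadef
  have hηaD : ∀ n t, HasDerivAt (ηa n) (G n t) t := by
    intro n t
    exact (intervalIntegral.integral_hasDerivAt_right
      ((hGc n).intervalIntegrable a t)
      ((hGc n).stronglyMeasurable.stronglyMeasurableAtFilter)
      (hGc n).continuousAt).const_add (η a)
  have hηacont : ∀ n, Continuous (ηa n) :=
    fun n => continuous_iff_continuousAt.2 fun t => (hηaD n t).continuousAt
  -- L¹ bound on intervals
  have hL1 : ∀ n, ∀ t ∈ Icc a b, (∫ s in a..t, ‖G n s - F₁ s‖) ≤ e n := by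
    intro n t ht
    rw [intervalIntegral.integral_of_le ht.1]
    calc (∫ s in Ioc a t, ‖G n s - F₁ s‖) ≤ ∫ s, ‖G n s - F₁ s‖ :=
          setIntegral_le_integral ((hGi n).sub hF₁).norm
            (Eventually.of_forall fun x => norm_nonneg _)
      _ = e n := by simp [hedef, norm_sub_rev]
  -- closeness of approximating curves
  have hclose : ∀ n, ∀ t ∈ Icc a b, ‖ηa n t - η t‖ ≤ e n := by
    intro n t ht
    have h1 : η t = η a + ∫ s in a..t, F₁ s := by
      rw [hsol t ht]
      congr 1
      exact (intervalIntegral.integral_congr fun s hsm => hF₁eq (huIcc t ht hsm)).symm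
    have h2 : ηa n t - η t = ∫ s in a..t, (G n s - F₁ s) := by
      rw [h1, intervalIntegral.integral_sub ((hGc n).intervalIntegrable a t)
        hF₁.intervalIntegrable]
      simp [hηadef]
    rw [h2]
    exact le_trans (intervalIntegral.norm_integral_le_integral_norm ht.1) (hL1 n t ht)
  -- eventually the approximate curves live in W
  have hev : ∀ᶠ n in atTop, e n < δ := heT.eventually (gt_mem_nhds hδ)
  have hmemW : ∀ n, e n < δ → ∀ t ∈ Icc a b, ηa n t ∈ W := by
    intro n hn t ht
    apply hδW
    rw [Metric.mem_thickening_iff]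
    exact ⟨η t, ⟨t, ht, rfl⟩, by
      rw [dist_eq_norm]; exact lt_of_le_of_lt (hclose n t ht) hn⟩
  -- FTC for the approximations
  have hFTC : ∀ n, e n < δ → ∀ t ∈ Icc a b,
      φ (ηa n t) = φ (η a) + ∫ s in a..t, A (ηa n s) (G n s) := by
    intro n hn t ht
    have hd : ∀ x ∈ uIcc a t, HasDerivAt (fun u => φ (ηa n u)) (A (ηa n x) (G n x)) x := by
      intro x hx
      have hmem : ηa n x ∈ U := (hmemW n hn x (huIcc t ht hx)).1
      exact (hder _ hmem).comp_hasDerivAt x (hηaD n x)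
    have hmaps : MapsTo (ηa n) (uIcc a t) U :=
      fun s hs => (hmemW n hn s (huIcc t ht hs)).1
    have hint : IntervalIntegrable (fun s => A (ηa n s) (G n s)) volume a t := by
      apply ContinuousOn.intervalIntegrable
      exact isBoundedBilinearMap_apply.continuous.comp_continuousOn
        ((hAc.comp (hηacont n).continuousOn hmaps).prodMk (hGc n).continuousOn)
    have hsub := intervalIntegral.integral_eq_sub_of_hasDerivAt hd hint
    have hηaa : ηa n a = η a := by simp [hηadef]
    rw [hsub, hηaa]
    abel
  -- the key identity
  have hkey : ∀ t ∈ Icc a b, φ (η t) = φ (η a) + ∫ s in a..t, A (η s) (F₁ s) := by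
    intro t ht
    have hconv : ∀ s ∈ Icc a b, Tendsto (fun n => ηa n s) atTop (𝓝 (η s)) := by
      intro s hs
      rw [← tendsto_sub_nhds_zero_iff]
      exact squeeze_zero_norm (fun n => hclose n s hs) heT
    -- LHS limit
    have hT1 : Tendsto (fun n => φ (ηa n t)) atTop (𝓝 (φ (η t))) :=
      ((hφc.continuousAt (hU.mem_nhds (hηU t ht))).tendsto).comp (hconv t ht)
    -- RHS limit: split the integral
    have hIoc : Ι a t ⊆ Icc a b := fun s hs => huIcc t ht (Ioc_subset_Icc_self hs)
    have hAESM : ∀ n, e n < δ → AEStronglyMeasurable (fun s => A (ηa n s))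
        (volume.restrict (Ι a t)) := by
      intro n hn
      have : ContinuousOn (fun s => A (ηa n s)) (Ι a t) :=
        hAc.comp (hηacont n).continuousOn (fun s hs => (hmemW n hn s (hIoc hs)).1)
      exact this.aestronglyMeasurable measurableSet_uIoc
    have hbnd : ∀ n, e n < δ → ∀ s ∈ Ι a t, ‖A (ηa n s)‖ ≤ M₀ + 1 :=
      fun n hn s hs => le_of_lt (hmemW n hn s (hIoc hs)).2
    set I₁ : ℕ → F := fun n => ∫ s in a..t, A (ηa n s) (F₁ s) with hI₁def
    set I₂ : ℕ → F := fun n => ∫ s in a..t, A (ηa n s) (G n s - F₁ s) with hI₂def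
    have hint2 : ∀ n, e n < δ → ∀ H : ℝ → E, Integrable H →
        IntervalIntegrable (fun s => A (ηa n s) (H s)) volume a t := by
      intro n hn H hH
      rw [intervalIntegrable_iff]
      apply Integrable.mono' ((hH.norm.const_mul (M₀ + 1)).integrableOn)
      · exact isBoundedBilinearMap_apply.continuous.comp_aestronglyMeasurable
          ((hAESM n hn).prodMk hH.aestronglyMeasurable.restrict)
      · filter_upwards [ae_restrict_mem measurableSet_uIoc] with s hs
        calc ‖A (ηa n s) (H s)‖ ≤ ‖A (ηa n s)‖ * ‖H s‖ := ContinuousLinearMap.le_opNorm _ _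
          _ ≤ (M₀ + 1) * ‖H s‖ :=
            mul_le_mul_of_nonneg_right (hbnd n hn s hs) (norm_nonneg _)
    have hT2 : Tendsto I₁ atTop (𝓝 (∫ s in a..t, A (η s) (F₁ s))) := by
      apply intervalIntegral.tendsto_integral_filter_of_dominated_convergence
          (fun s => (M₀ + 1) * ‖F₁ s‖)
      · filter_upwards [hev] with n hn
        exact isBoundedBilinearMap_apply.continuous.comp_aestronglyMeasurable
          ((hAESM n hn).prodMk hF₁.aestronglyMeasurable.restrict)
      · filter_upwards [hev] with n hn
        refine Eventually.of_forall fun s hs => ?_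
        calc ‖A (ηa n s) (F₁ s)‖ ≤ ‖A (ηa n s)‖ * ‖F₁ s‖ := ContinuousLinearMap.le_opNorm _ _
          _ ≤ (M₀ + 1) * ‖F₁ s‖ :=
            mul_le_mul_of_nonneg_right (hbnd n hn s hs) (norm_nonneg _)
      · exact (hF₁.norm.const_mul (M₀ + 1)).intervalIntegrable
      · refine Eventually.of_forall fun s hs => ?_
        have hsU : η s ∈ U := hηU s (hIoc hs)
        have h1 : Tendsto (fun n => A (ηa n s)) atTop (𝓝 (A (η s))) :=
          ((hAc.continuousAt (hU.mem_nhds hsU)).tendsto).comp (hconv s (hIoc hs))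
        exact (isBoundedBilinearMap_apply.continuous.tendsto _).comp
          (h1.prodMk_nhds tendsto_const_nhds)
    have hT3 : Tendsto I₂ atTop (𝓝 0) := by
      refine squeeze_zero_norm' ?_ (by simpa using heT.const_mul (M₀ + 1))
      filter_upwards [hev] with n hn
      have hle : ‖I₂ n‖ ≤ |∫ s in a..t, (M₀ + 1) * ‖G n s - F₁ s‖| := by
        apply intervalIntegral.norm_integral_le_abs_of_norm_le
        · filter_upwards [ae_restrict_mem measurableSet_uIoc] with s hs
          calc ‖A (ηa n s) (G n s - F₁ s)‖ ≤ ‖A (ηa n s)‖ * ‖G n s - F₁ s‖ :=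
              ContinuousLinearMap.le_opNorm _ _
            _ ≤ (M₀ + 1) * ‖G n s - F₁ s‖ :=
              mul_le_mul_of_nonneg_right (hbnd n hn s hs) (norm_nonneg _)
        · exact (((hGi n).sub hF₁).norm.const_mul (M₀ + 1)).intervalIntegrable
      refine hle.trans ?_
      rw [abs_of_nonneg (intervalIntegral.integral_nonneg ht.1 fun u _ => by positivity),
        intervalIntegral.integral_const_mul]
      exact mul_le_mul_of_nonneg_left (hL1 n t ht) (by linarith)
    have hsplit : ∀ᶠ n in atTop, (∫ s in a..t, A (ηa n s) (G n s)) = I₁ n + I₂ n := by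
      filter_upwards [hev] with n hn
      have hi₂ : IntervalIntegrable (fun s => A (ηa n s) (G n s - F₁ s)) volume a t := by
        simpa using hint2 n hn (G n - F₁) ((hGi n).sub hF₁)
      rw [hI₁def, hI₂def, ← intervalIntegral.integral_add (hint2 n hn F₁ hF₁) hi₂]
      refine intervalIntegral.integral_congr fun s _ => ?_
      simp [map_sub]
    have hT4 : Tendsto (fun n => φ (η a) + (I₁ n + I₂ n)) atTop
        (𝓝 (φ (η a) + ((∫ s in a..t, A (η s) (F₁ s)) + 0))) :=
      tendsto_const_nhds.add (hT2.add hT3)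
    have hfinal : Tendsto (fun n => φ (ηa n t)) atTop
        (𝓝 (φ (η a) + ((∫ s in a..t, A (η s) (F₁ s)) + 0))) := by
      apply hT4.congr'
      filter_upwards [hev, hsplit] with n hn hs
      rw [← hs, ← hFTC n hn t ht]
    have huniq := tendsto_nhds_unique hT1 hfinal
    rw [huniq, add_zero]
  -- assemble the conclusion
  have heqG : ∀ s ∈ Icc a b, g (φ (η s)) (γ s) = A (η s) (F₀ s) :=
    fun s hs => hrel _ (hηU s hs) _
  have hAηc : ContinuousOn (fun s => A (η s)) (Icc a b) := hAc.comp hηc hηU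
  have hGint : IntegrableOn (fun s => A (η s) (F₀ s)) (Icc a b) := by
    apply Integrable.mono' (hFi.norm.const_mul M₀)
    · exact isBoundedBilinearMap_apply.continuous.comp_aestronglyMeasurable
        ((hAηc.aestronglyMeasurable measurableSet_Icc).prodMk hFi.aestronglyMeasurable)
    · filter_upwards [ae_restrict_mem measurableSet_Icc] with s hs
      calc ‖A (η s) (F₀ s)‖ ≤ ‖A (η s)‖ * ‖F₀ s‖ := ContinuousLinearMap.le_opNorm _ _
        _ ≤ M₀ * ‖F₀ s‖ :=
          mul_le_mul_of_nonneg_right (hM₀ _ ⟨s, hs, rfl⟩) (norm_nonneg _)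
  refine ⟨hφc.comp hηc hηU,
    hGint.congr_fun (fun s hs => (heqG s hs).symm) measurableSet_Icc, ?_⟩
  intro t ht
  simp only [Function.comp_apply]
  rw [hkey t ht]
  congr 1
  refine intervalIntegral.integral_congr fun s hsm => ?_
  have hs' := huIcc t ht hsm
  rw [hF₁eq hs', ← heqG s hs']


/-- Transport of Carathéodory solutions under a C¹ diffeomorphism relating the two
vector fields: `η` solves `η' = f(η, γ(t))` iff `φ ∘ η` solves `x' = g(x, γ(t))`,
where `g(φ(x), z) = Dφ(x)(f(x,z))`. -/
theorem caratheodory_sol_diffeo_related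
    {E F Z : Type*} [NormedAddCommGroup E] [NormedSpace ℝ E] [CompleteSpace E]
    [NormedAddCommGroup F] [NormedSpace ℝ F] [CompleteSpace F]
    [NormedAddCommGroup Z] [NormedSpace ℝ Z] [CompleteSpace Z]
    (U : Set E) (hU : IsOpen U) (V : Set F) (hV : IsOpen V)
    (φ : E → F) (ψ : F → E) (hφ : ContDiffOn ℝ 1 φ U) (hψ : ContDiffOn ℝ 1 ψ V)
    (hφV : MapsTo φ U V) (hψU : MapsTo ψ V U)
    (hinv₁ : ∀ x ∈ U, ψ (φ x) = x) (hinv₂ : ∀ y ∈ V, φ (ψ y) = y)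
    (φ' : E → E →L[ℝ] F) (hφ' : ∀ x ∈ U, HasFDerivAt φ (φ' x) x)
    (f : E → Z → E) (g : F → Z → F)
    (hfc : ContinuousOn (fun p : E × Z => f p.1 p.2) (U ×ˢ (univ : Set Z)))
    (hgc : ContinuousOn (fun p : F × Z => g p.1 p.2) (V ×ˢ (univ : Set Z)))
    (hflin : ∀ x ∈ U, IsLinearMap ℝ (f x)) (hglin : ∀ y ∈ V, IsLinearMap ℝ (g y))
    (hrel : ∀ x ∈ U, ∀ z : Z, g (φ x) z = φ' x (f x z))
    (a b : ℝ) (hab : a < b) (γ : ℝ → Z) (hγ : IntegrableOn γ (Icc a b))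
    (η : ℝ → E) (hηU : ∀ t ∈ Icc a b, η t ∈ U) :
    IsCaraSol f γ a b a η ↔ IsCaraSol g γ a b a (φ ∘ η) := by
  constructor
  · intro h
    have hrel' : ∀ x ∈ U, ∀ z : Z, g (φ x) z = fderiv ℝ φ x (f x z) := by
      intro x hx z
      rw [hrel x hx z, (hφ' x hx).fderiv]
    exact isCaraSol_comp U hU φ hφ f g hrel' a b hab.le γ η hηU h
  · intro h
    have hψη : ∀ t ∈ Icc a b, (φ ∘ η) t ∈ V := fun t ht => hφV (hηU t ht)
    have hrel'' : ∀ y ∈ V, ∀ z : Z, f (ψ y) z = fderiv ℝ ψ y (g y z) := by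
      intro y hy z
      have hx : ψ y ∈ U := hψU hy
      have hψd : HasFDerivAt ψ (fderiv ℝ ψ y) y :=
        ((hψ.differentiableOn one_ne_zero).differentiableAt (hV.mem_nhds hy)).hasFDerivAt
      have hψd' : HasFDerivAt ψ (fderiv ℝ ψ y) (φ (ψ y)) := (hinv₂ y hy).symm ▸ hψd
      have hcomp : HasFDerivAt (ψ ∘ φ) ((fderiv ℝ ψ y).comp (φ' (ψ y))) (ψ y) :=
        hψd'.comp (ψ y) (hφ' _ hx)
      have hid : HasFDerivAt (ψ ∘ φ) (ContinuousLinearMap.id ℝ E) (ψ y) := by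
        have heq : (ψ ∘ φ) =ᶠ[𝓝 (ψ y)] id :=
          eventually_of_mem (hU.mem_nhds hx) fun x' hx' => hinv₁ x' hx'
        exact (hasFDerivAt_id (ψ y)).congr_of_eventuallyEq heq
      have huniq := hcomp.unique hid
      calc f (ψ y) z = ((fderiv ℝ ψ y).comp (φ' (ψ y))) (f (ψ y) z) := by
            rw [huniq]; rfl
        _ = fderiv ℝ ψ y (φ' (ψ y) (f (ψ y) z)) := rfl
        _ = fderiv ℝ ψ y (g y z) := by
            rw [← hrel _ hx z, hinv₂ y hy]
    have key := isCaraSol_comp V hV ψ hψ g f hrel'' a b hab.le γ (φ ∘ η) hψη h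
    exact isCaraSol_congr (left_mem_Icc.2 hab.le)
      (fun t ht => by simp [Function.comp, hinv₁ _ (hηU t ht)]) key
end

section
/- Let (E_n) be a sequence of Banach spaces with continuous linear inclusions E_{n+1} ↪ E_n, and E = ⋂_n E_n with the projective limit topology. Let a < b. A curve η : [a,b] → E is absolutely continuous (i.e., η(t) = η(a) + ∫_a^t γ(s) ds for some γ ∈ L¹([a,b],E)) if and only if λ_n ∘ η : [a,b] → E_n is absolutely continuous for every n, where λ_n : E → E_n is the inclusion. -/
open Set MeasureTheory

/-- The projective limit `E = ⋂ₙ Eₙ` of a sequence of Banach spaces with continuous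
linear inclusion maps `Eₙ₊₁ → Eₙ`, realized as compatible sequences in `Π n, Eₙ`. -/
def projLim (Eb : ℕ → Type*) [∀ n, NormedAddCommGroup (Eb n)] [∀ n, NormedSpace ℝ (Eb n)]
    (ι : ∀ n, Eb (n + 1) →L[ℝ] Eb n) : Submodule ℝ (∀ n, Eb n) where
  carrier := {x | ∀ n, ι n (x (n + 1)) = x n}
  add_mem' := by intro x y hx hy n; simp [hx n, hy n]
  zero_mem' := by intro n; simp
  smul_mem' := by intro c x hx n; simp [hx n]

open Filter Topology in
/-- If an integrable function has vanishing integral over every interval `Ioc c d`, then it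
vanishes almost everywhere. (Lebesgue differentiation.) -/
lemma aux_ae_zero {F : Type*} [NormedAddCommGroup F] [NormedSpace ℝ F] [CompleteSpace F]
    {h : ℝ → F} (hint : Integrable h volume)
    (h0 : ∀ c d : ℝ, ∫ s in Ioc c d, h s = 0) :
    ∀ᵐ x, h x = 0 := by
  have hloc := hint.locallyIntegrable
  filter_upwards [IsUnifLocDoublingMeasure.ae_tendsto_average (μ := volume) hloc 1] with x hx
  have hδ : Tendsto (fun j : ℕ => (1:ℝ)/(j+1)) atTop (𝓝[>] (0:ℝ)) := by
    apply tendsto_nhdsWithin_of_tendsto_nhds_of_eventually_within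
    · exact tendsto_one_div_add_atTop_nhds_zero_nat
    · exact Filter.Eventually.of_forall fun j => by
        simp only [mem_Ioi]; positivity
  have hmem : ∀ᶠ j : ℕ in atTop, x ∈ Metric.closedBall x (1 * ((1:ℝ)/(j+1))) :=
    Filter.Eventually.of_forall fun j => by
      simp only [Metric.mem_closedBall, dist_self, one_mul]
      positivity
  have H := hx (fun _ : ℕ => x) (fun j => (1:ℝ)/(j+1)) hδ hmem
  have Hz : ∀ j : ℕ, (⨍ y in Metric.closedBall x ((1:ℝ)/(j+1)), h y) = 0 := by
    intro j
    rw [setAverage_eq, Real.closedBall_eq_Icc,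
      ← setIntegral_congr_set (Ioc_ae_eq_Icc (μ := volume)), h0, smul_zero]
  rw [show (fun j : ℕ => ⨍ y in Metric.closedBall x ((1:ℝ)/(j+1)), h y) = fun _ => (0:F)
    from funext Hz] at H
  exact (tendsto_nhds_unique tendsto_const_nhds H).symm

/-- A curve into the projective limit `E = ⋂ₙ Eₙ` is absolutely continuous (i.e.,
an indefinite integral of an `L¹` curve `γ` with values in `E`) if and only if each
of its components `λₙ ∘ η : [a,b] → Eₙ` is absolutely continuous. -/
theorem absCont_into_projLim_iff
    (Eb : ℕ → Type*) [∀ n, NormedAddCommGroup (Eb n)] [∀ n, NormedSpace ℝ (Eb n)]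
    [∀ n, CompleteSpace (Eb n)]
    (ι : ∀ n, Eb (n + 1) →L[ℝ] Eb n) (hι : ∀ n, Function.Injective (ι n))
    (a b : ℝ) (hab : a < b) (η : ℝ → projLim Eb ι) :
    (∃ γ : ℝ → projLim Eb ι, ∀ n,
        IntegrableOn (fun s => ((γ s : ∀ m, Eb m) n)) (Icc a b) ∧
        ∀ t ∈ Icc a b, ((η t : ∀ m, Eb m) n) =
          ((η a : ∀ m, Eb m) n) + ∫ s in a..t, ((γ s : ∀ m, Eb m) n)) ↔
      ∀ n, ∃ γn : ℝ → Eb n, IntegrableOn γn (Icc a b) ∧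
        ∀ t ∈ Icc a b, ((η t : ∀ m, Eb m) n) =
          ((η a : ∀ m, Eb m) n) + ∫ s in a..t, γn s := by
  constructor
  · rintro ⟨γ, hγ⟩ n
    exact ⟨fun s => (γ s : ∀ m, Eb m) n, hγ n⟩
  · intro H
    choose γn hint heq using H
    -- interval integrability
    have hii : ∀ n, ∀ t ∈ Icc a b, IntervalIntegrable (γn n) volume a t := by
      intro n t ht
      apply IntegrableOn.intervalIntegrable
      apply (hint n).mono_set
      rw [uIcc_of_le ht.1]
      exact Icc_subset_Icc le_rfl ht.2
    have hintc : ∀ n, IntegrableOn (fun s => ι n (γn (n+1) s)) (Icc a b) :=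
      fun n => (ι n).integrable_comp (hint (n+1))
    have hiic : ∀ n, ∀ t ∈ Icc a b, IntervalIntegrable (fun s => ι n (γn (n+1) s)) volume a t := by
      intro n t ht
      apply IntegrableOn.intervalIntegrable
      apply (hintc n).mono_set
      rw [uIcc_of_le ht.1]
      exact Icc_subset_Icc le_rfl ht.2
    -- equal interval integrals
    have hInt_eq : ∀ n, ∀ t ∈ Icc a b,
        (∫ s in a..t, γn n s) = ∫ s in a..t, ι n (γn (n+1) s) := by
      intro n t ht
      have h1 : ((η t : ∀ m, Eb m) n) = ((η a : ∀ m, Eb m) n) + ∫ s in a..t, γn n s :=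
        heq n t ht
      have h2 : ι n ((η t : ∀ m, Eb m) (n+1)) =
          ι n ((η a : ∀ m, Eb m) (n+1)) + ∫ s in a..t, ι n (γn (n+1) s) := by
        rw [heq (n+1) t ht, map_add, (ι n).intervalIntegral_comp_comm]
        apply IntegrableOn.intervalIntegrable
        apply (hint (n+1)).mono_set
        rw [uIcc_of_le ht.1]
        exact Icc_subset_Icc le_rfl ht.2
      have hc : ∀ s, ι n ((η s : ∀ m, Eb m) (n+1)) = (η s : ∀ m, Eb m) n :=
        fun s => (η s).2 n
      rw [hc, hc] at h2
      rw [h1] at h2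
      exact add_left_cancel h2
    -- the difference vanishes a.e. on Icc a b
    have hD : ∀ n, ∀ᵐ s, s ∈ Icc a b → ι n (γn (n+1) s) = γn n s := by
      intro n
      set D : ℝ → Eb n := fun s => γn n s - ι n (γn (n+1) s) with hDdef
      have hDint : IntegrableOn D (Icc a b) := (hint n).sub (hintc n)
      have hind : Integrable ((Icc a b).indicator D) volume :=
        hDint.integrable_indicator measurableSet_Icc
      have hDii : ∀ t ∈ Icc a b, IntervalIntegrable D volume a t :=
        fun t ht => (hii n t ht).sub (hiic n t ht)
      have key : ∀ t ∈ Icc a b, (∫ s in a..t, D s) = 0 := by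
        intro t ht
        have : (∫ s in a..t, D s) = (∫ s in a..t, γn n s) - ∫ s in a..t, ι n (γn (n+1) s) :=
          intervalIntegral.integral_sub (hii n t ht) (hiic n t ht)
        rw [this, hInt_eq n t ht, sub_self]
      have hzero : ∀ c d : ℝ, (∫ s in Ioc c d, ((Icc a b).indicator D) s) = 0 := by
        intro c d
        rw [setIntegral_indicator measurableSet_Icc]
        have hset : (Ioc c d ∩ Icc a b : Set ℝ) =ᵐ[volume] (Ioc (max c a) (min d b) : Set ℝ) := by
          have h := ae_eq_set_inter (Filter.EventuallyEq.refl (ae volume) (Ioc c d))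
            (Ioc_ae_eq_Icc (μ := volume) (a := a) (b := b)).symm
          rw [Ioc_inter_Ioc] at h
          exact h
        rw [setIntegral_congr_set hset]
        rcases le_or_gt (max c a) (min d b) with hle | hlt
        · set c' := max c a
          set d' := min d b
          have hc' : c' ∈ Icc a b := ⟨le_max_right _ _, hle.trans (min_le_right _ _)⟩
          have hd' : d' ∈ Icc a b := ⟨(le_max_right c a).trans hle, min_le_right _ _⟩
          have i1 : IntervalIntegrable D volume a c' := hDii c' hc'
          have i2 : IntervalIntegrable D volume a d' := hDii d' hd'
          have i3 : IntervalIntegrable D volume c' d' := i1.symm.trans i2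
          have hsplit := intervalIntegral.integral_add_adjacent_intervals i1 i3
          rw [key c' hc', key d' hd', zero_add] at hsplit
          rw [← intervalIntegral.integral_of_le hle, hsplit]
        · rw [Ioc_eq_empty (not_lt.mpr hlt.le), Measure.restrict_empty, integral_zero_measure]
      have := aux_ae_zero hind hzero
      filter_upwards [this] with s hs hmem
      have : ((Icc a b).indicator D) s = D s := indicator_of_mem hmem D
      rw [hs] at this
      have : D s = 0 := this.symm
      have := sub_eq_zero.mp this
      exact this.symm
    have hDall : ∀ᵐ s, ∀ n, s ∈ Icc a b → ι n (γn (n+1) s) = γn n s := ae_all_iff.mpr hD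
    classical
    set P : ℝ → Prop := fun s => (∀ n, ι n (γn (n+1) s) = γn n s) with hPdef
    refine ⟨fun s => if h : P s then ⟨fun n => γn n s, h⟩ else 0, fun n => ?_⟩
    have hcomp : ∀ᵐ s, s ∈ Icc a b →
        ((((if h : P s then ⟨fun n => γn n s, h⟩ else 0 : projLim Eb ι)) : ∀ m, Eb m) n)
          = γn n s := by
      filter_upwards [hDall] with s hs hmem
      by_cases h : P s
      · simp only [dif_pos h]
      · -- s ∈ Icc a b and hDall gives P s... not quite: hDall only on Icc; here mem holds
        exact absurd (fun m => hs m hmem) h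
    constructor
    · refine (hint n).congr ?_
      have h1 := ae_restrict_of_ae (μ := volume) (s := Icc a b) hcomp
      have h2 := ae_restrict_mem (μ := volume) (measurableSet_Icc (a := a) (b := b))
      filter_upwards [h1, h2] with s hs hmem
      exact (hs hmem).symm
    · intro t ht
      have : (∫ s in a..t,
          ((((if h : P s then ⟨fun n => γn n s, h⟩ else 0 : projLim Eb ι)) : ∀ m, Eb m) n))
          = ∫ s in a..t, γn n s := by
        apply intervalIntegral.integral_congr_ae
        filter_upwards [hcomp] with s hs hmem
        apply hs
        rw [uIoc_of_le ht.1] at hmem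
        exact ⟨hmem.1.le, hmem.2.trans ht.2⟩
      show ((η t : ∀ m, Eb m) n) = ((η a : ∀ m, Eb m) n) +
        ∫ s in a..t, ((((if h : P s then ⟨fun n => γn n s, h⟩ else 0 : projLim Eb ι)) : ∀ m, Eb m) n)
      rw [this]
      exact heq n t ht
end

section
/- Let E, Z be Banach spaces, f : B̄_R(y₀) × Z → E as in the Carathéodory existence lemma with constants L and S = sup ‖f(y,·)‖_op, and suppose L‖γ‖_{L¹} < 1, S‖γ‖_{L¹} ≤ R. Denote by η_γ the solution with η_γ(t₀) = y₀. Then the solution depends Lipschitz-continuously on the right-hand side data in the sense that for γ, γ̃ ∈ L¹([a,b],Z) both satisfying the smallness conditions, ‖η_γ − η_{γ̃}‖_∞ ≤ S‖γ − γ̃‖_{L¹} / (1 − L·max(‖γ‖_{L¹}, ‖γ̃‖_{L¹})). -/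
open Set MeasureTheory

/-- Lipschitz dependence of the Carathéodory solution on the right-hand side data:
for `γ, γ̃` both satisfying the smallness conditions, the corresponding solutions
`η_γ, η_γ̃` with `η(t₀) = y₀` satisfy
`‖η_γ − η_γ̃‖_∞ ≤ S ‖γ − γ̃‖_{L¹} / (1 − L max(‖γ‖_{L¹}, ‖γ̃‖_{L¹}))`. -/
theorem lipschitz_dependence_caratheodory
    {E Z : Type*} [NormedAddCommGroup E] [NormedSpace ℝ E] [CompleteSpace E]
    [NormedAddCommGroup Z] [NormedSpace ℝ Z] [CompleteSpace Z]
    (y₀ : E) (R : ℝ) (hR : 0 < R) (f : E → Z → E)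
    (hf : ContinuousOn (fun p : E × Z => f p.1 p.2) (Metric.closedBall y₀ R ×ˢ (univ : Set Z)))
    (hlin : ∀ y ∈ Metric.closedBall y₀ R, IsLinearMap ℝ (f y))
    (L : ℝ) (hL : 0 ≤ L)
    (hLip : ∀ y₁ ∈ Metric.closedBall y₀ R, ∀ y₂ ∈ Metric.closedBall y₀ R, ∀ z : Z,
      ‖f y₂ z - f y₁ z‖ ≤ L * ‖y₂ - y₁‖ * ‖z‖)
    (S : ℝ) (hS : ∀ y ∈ Metric.closedBall y₀ R, ∀ z : Z, ‖f y z‖ ≤ S * ‖z‖)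
    (a b : ℝ) (hab : a < b) (t₀ : ℝ) (ht₀ : t₀ ∈ Icc a b)
    (γ γ' : ℝ → Z) (hγ : IntegrableOn γ (Icc a b)) (hγ' : IntegrableOn γ' (Icc a b))
    (hsmall : L * ∫ s in Icc a b, ‖γ s‖ < 1)
    (hsmall' : L * ∫ s in Icc a b, ‖γ' s‖ < 1)
    (hSR : S * ∫ s in Icc a b, ‖γ s‖ ≤ R)
    (hSR' : S * ∫ s in Icc a b, ‖γ' s‖ ≤ R)
    (η η' : ℝ → E)
    (hηball : ∀ t ∈ Icc a b, η t ∈ Metric.closedBall y₀ R)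
    (hη'ball : ∀ t ∈ Icc a b, η' t ∈ Metric.closedBall y₀ R)
    (hη : IsCaraSol f γ a b t₀ η) (hη' : IsCaraSol f γ' a b t₀ η')
    (hη0 : η t₀ = y₀) (hη'0 : η' t₀ = y₀) :
    ∀ t ∈ Icc a b, ‖η t - η' t‖ ≤
      S * (∫ s in Icc a b, ‖γ s - γ' s‖) /
        (1 - L * max (∫ s in Icc a b, ‖γ s‖) (∫ s in Icc a b, ‖γ' s‖)) := by
  intro t ht
  set I := ∫ s in Icc a b, ‖γ s‖ with hIdef
  set I' := ∫ s in Icc a b, ‖γ' s‖ with hI'def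
  set D := ∫ s in Icc a b, ‖γ s - γ' s‖ with hDdef
  set q := L * max I I' with hqdef
  have hInn : 0 ≤ I := integral_nonneg fun s => norm_nonneg _
  have hI'nn : 0 ≤ I' := integral_nonneg fun s => norm_nonneg _
  have hq1 : q < 1 := by
    rw [hqdef, mul_max_of_nonneg _ _ hL]
    exact max_lt hsmall hsmall'
  have hq0 : 0 ≤ q := mul_nonneg hL (le_trans hInn (le_max_left _ _))
  -- maximum of the difference
  obtain ⟨t₁, ht₁, hmax⟩ := isCompact_Icc.exists_isMaxOn (nonempty_Icc.2 hab.le)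
    ((hη.1.sub hη'.1).norm)
  set N := ‖η t₁ - η' t₁‖ with hNdef
  have hNnn : 0 ≤ N := norm_nonneg _
  have hmax' : ∀ s ∈ Icc a b, ‖η s - η' s‖ ≤ N := fun s hs => hmax hs
  -- integrability facts
  have hIntNorm : IntegrableOn (fun s => ‖f (η s) (γ s) - f (η' s) (γ' s)‖) (Icc a b) :=
    (hη.2.1.sub hη'.2.1).norm
  have hA : IntegrableOn (fun s => L * N * ‖γ s‖) (Icc a b) := hγ.norm.const_mul (L * N)
  have hB : IntegrableOn (fun s => S * ‖γ s - γ' s‖) (Icc a b) := by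
    exact (hγ.sub hγ').norm.const_mul S
  have hIntRHS : IntegrableOn (fun s => L * N * ‖γ s‖ + S * ‖γ s - γ' s‖) (Icc a b) :=
    hA.add hB
  -- pointwise bound
  have hpt : ∀ s ∈ Icc a b,
      ‖f (η s) (γ s) - f (η' s) (γ' s)‖ ≤ L * N * ‖γ s‖ + S * ‖γ s - γ' s‖ := by
    intro s hs
    have hηs := hηball s hs
    have hη's := hη'ball s hs
    have h1 : ‖f (η s) (γ s) - f (η' s) (γ s)‖ ≤ L * N * ‖γ s‖ := by
      calc ‖f (η s) (γ s) - f (η' s) (γ s)‖ ≤ L * ‖η s - η' s‖ * ‖γ s‖ :=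
            hLip (η' s) hη's (η s) hηs (γ s)
        _ ≤ L * N * ‖γ s‖ :=
            mul_le_mul_of_nonneg_right
              (mul_le_mul_of_nonneg_left (hmax' s hs) hL) (norm_nonneg _)
    have h2 : ‖f (η' s) (γ s) - f (η' s) (γ' s)‖ ≤ S * ‖γ s - γ' s‖ := by
      have hlin' := hlin (η' s) hη's
      have : f (η' s) (γ s) - f (η' s) (γ' s) = f (η' s) (γ s - γ' s) :=
        (hlin'.mk' _).map_sub (γ s) (γ' s) |>.symm
      rw [this]
      exact hS (η' s) hη's _
    calc ‖f (η s) (γ s) - f (η' s) (γ' s)‖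
        ≤ ‖f (η s) (γ s) - f (η' s) (γ s)‖ + ‖f (η' s) (γ s) - f (η' s) (γ' s)‖ :=
          norm_sub_le_norm_sub_add_norm_sub _ _ _
      _ ≤ L * N * ‖γ s‖ + S * ‖γ s - γ' s‖ := add_le_add h1 h2
  -- key estimate
  have key : ∀ u ∈ Icc a b, ‖η u - η' u‖ ≤ q * N + S * D := by
    intro u hu
    have hsub : Set.uIoc t₀ u ⊆ Icc a b := by
      rw [uIoc]
      exact fun x hx => ⟨le_trans (le_min ht₀.1 hu.1) (le_of_lt hx.1),
        le_trans hx.2 (max_le ht₀.2 hu.2)⟩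
    have hint1 : IntervalIntegrable (fun s => f (η s) (γ s)) volume t₀ u :=
      intervalIntegrable_iff.2 (hη.2.1.mono_set hsub)
    have hint2 : IntervalIntegrable (fun s => f (η' s) (γ' s)) volume t₀ u :=
      intervalIntegrable_iff.2 (hη'.2.1.mono_set hsub)
    have heq : η u - η' u = ∫ s in t₀..u, (f (η s) (γ s) - f (η' s) (γ' s)) := by
      rw [intervalIntegral.integral_sub hint1 hint2, hη.2.2 u hu, hη'.2.2 u hu, hη0, hη'0]
      abel
    rw [heq]
    calc ‖∫ s in t₀..u, (f (η s) (γ s) - f (η' s) (γ' s))‖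
        ≤ ∫ s in Set.uIoc t₀ u, ‖f (η s) (γ s) - f (η' s) (γ' s)‖ :=
          intervalIntegral.norm_integral_le_integral_norm_uIoc
      _ ≤ ∫ s in Icc a b, ‖f (η s) (γ s) - f (η' s) (γ' s)‖ :=
          setIntegral_mono_set hIntNorm
            (Filter.Eventually.of_forall fun s => norm_nonneg _)
            (HasSubset.Subset.eventuallyLE hsub)
      _ ≤ ∫ s in Icc a b, (L * N * ‖γ s‖ + S * ‖γ s - γ' s‖) :=
          setIntegral_mono_on hIntNorm hIntRHS measurableSet_Icc hpt
      _ = L * N * I + S * D := by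
          rw [integral_add hA hB, integral_const_mul, integral_const_mul]
      _ ≤ q * N + S * D := by
          have : L * I ≤ q := by
            rw [hqdef]
            exact mul_le_mul_of_nonneg_left (le_max_left _ _) hL
          nlinarith
  have hN : N ≤ q * N + S * D := key t₁ ht₁
  have hNle : N ≤ S * D / (1 - q) := by
    rw [le_div_iff₀ (by linarith : (0:ℝ) < 1 - q)]
    nlinarith
  exact le_trans (hmax' t ht) hNle
end
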